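/- arXiv:1105.1488 — 2 statements merged into one kernel-verified Lean document; each statement's English description precedes it below -/
import Mathlib

section
/- Let n, m, M, N be natural numbers with m + 1 ≤ n, let v ∈ ℝ^{n×n} be invertible, β^η ∈ ℝ^{m×n}, β̃^η ∈ ℝ^{m×N}, β̃^ζ ∈ ℝ^{M×N}, and let K > 0 and c₁ > 0 be such that xᵀ B Bᵀ x ≥ c₁ ‖x‖² for all x ∈ ℝ^{m+M}. Then for every ξ ∈ ℝ^{1+m+M} with ‖ξ‖ = 1, the supremum over u ∈ Δ = {u ∈ ℝⁿ : uᵀ v vᵀ u ≤ K} of ξᵀ A(u) A(u)ᵀ ξ is at least min(K, c₁); in particular, the infimum over unit vectors ξ of this supremum is strictly positive. -/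
open Matrix

/-- If `B Bᵀ ≥ c₁ I` and `m + 1 ≤ n`, then for every unit vector `ξ`
the supremum over `u ∈ Δ = {u : uᵀ v vᵀ u ≤ K}` of `ξᵀ A(u) A(u)ᵀ ξ` is at least
`min K c₁`; in particular the infimum over unit `ξ` of this supremum is positive. -/
theorem sup_quadratic_form_ge_min
    (n m M N : ℕ) (hmn : m + 1 ≤ n)
    (v : Matrix (Fin n) (Fin n) ℝ) (hv : IsUnit v)
    (βη : Matrix (Fin m) (Fin n) ℝ) (βη' : Matrix (Fin m) (Fin N) ℝ)
    (βζ' : Matrix (Fin M) (Fin N) ℝ)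
    (K c₁ : ℝ) (hK : 0 < K) (hc₁ : 0 < c₁)
    (B : Matrix (Fin m ⊕ Fin M) (Fin n ⊕ Fin N) ℝ)
    (hB : B = Matrix.fromBlocks βη βη' 0 βζ')
    (hBB : ∀ x : Fin m ⊕ Fin M → ℝ, c₁ * (x ⬝ᵥ x) ≤ x ⬝ᵥ ((B * Bᵀ) *ᵥ x))
    (A : (Fin n → ℝ) → Matrix (Fin 1 ⊕ (Fin m ⊕ Fin M)) (Fin n ⊕ Fin N) ℝ)
    (hA : ∀ u : Fin n → ℝ,
      A u = Matrix.fromBlocks (Matrix.replicateRow (Fin 1) (vᵀ *ᵥ u)) 0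
        (Matrix.fromRows βη (0 : Matrix (Fin M) (Fin n) ℝ)) (Matrix.fromRows βη' βζ')) :
    (∀ ξ : Fin 1 ⊕ (Fin m ⊕ Fin M) → ℝ, ξ ⬝ᵥ ξ = 1 →
      min K c₁ ≤
        ⨆ u : {u : Fin n → ℝ // (vᵀ *ᵥ u) ⬝ᵥ (vᵀ *ᵥ u) ≤ K},
          ξ ⬝ᵥ ((A u.1 * (A u.1)ᵀ) *ᵥ ξ)) ∧
    0 < ⨅ ξ : {ξ : Fin 1 ⊕ (Fin m ⊕ Fin M) → ℝ // ξ ⬝ᵥ ξ = 1},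
          ⨆ u : {u : Fin n → ℝ // (vᵀ *ᵥ u) ⬝ᵥ (vᵀ *ᵥ u) ≤ K},
            ξ.1 ⬝ᵥ ((A u.1 * (A u.1)ᵀ) *ᵥ ξ.1) := by
  have hn : 0 < n := lt_of_lt_of_le (Nat.succ_pos m) hmn
  have hdet : IsUnit (vᵀ).det := by
    rw [Matrix.det_transpose]
    exact (Matrix.isUnit_iff_isUnit_det v).mp hv
  have hWinv : ∀ w : Fin n → ℝ, vᵀ *ᵥ ((vᵀ)⁻¹ *ᵥ w) = w := by
    intro w
    rw [Matrix.mulVec_mulVec, Matrix.mul_nonsing_inv _ hdet, Matrix.one_mulVec]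
  have main : ∀ ξ : Fin 1 ⊕ (Fin m ⊕ Fin M) → ℝ, ξ ⬝ᵥ ξ = 1 →
      min K c₁ ≤
        ⨆ u : {u : Fin n → ℝ // (vᵀ *ᵥ u) ⬝ᵥ (vᵀ *ᵥ u) ≤ K},
          ξ ⬝ᵥ ((A u.1 * (A u.1)ᵀ) *ᵥ ξ) := by
    intro ξ hξ
    set ξ₀ : ℝ := ξ (Sum.inl 0) with hξ₀
    set ξ₁ : (Fin m ⊕ Fin M) → ℝ := fun i => ξ (Sum.inr i) with hξ₁
    set b : (Fin n ⊕ Fin N) → ℝ := Bᵀ *ᵥ ξ₁ with hb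
    -- key computation
    have key : ∀ u : Fin n → ℝ, ξ ⬝ᵥ ((A u * (A u)ᵀ) *ᵥ ξ)
        = ∑ j : Fin n ⊕ Fin N, (ξ₀ * Sum.elim (vᵀ *ᵥ u) 0 j + b j) ^ 2 := by
      intro u
      have hy : (A u)ᵀ *ᵥ ξ = fun j => ξ₀ * Sum.elim (vᵀ *ᵥ u) 0 j + b j := by
        funext j
        cases j with
        | inl j =>
          simp [hA, hb, hξ₁, hξ₀, hB, Matrix.mulVec, dotProduct, Fintype.sum_sum_type,
            Matrix.fromBlocks, Matrix.fromRows_apply_inl, Matrix.fromRows_apply_inr, mul_comm]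
        | inr j =>
          simp [hA, hb, hξ₁, hB, Matrix.mulVec, dotProduct, Fintype.sum_sum_type,
            Matrix.fromBlocks, Matrix.fromRows_apply_inl, Matrix.fromRows_apply_inr, mul_comm]
      rw [← Matrix.mulVec_mulVec, Matrix.dotProduct_mulVec, ← Matrix.mulVec_transpose, hy]
      simp [dotProduct, sq]
    have hsq : ∀ x : (Fin m ⊕ Fin M) → ℝ, (0:ℝ) ≤ x ⬝ᵥ x :=
      fun x => Finset.sum_nonneg fun i _ => mul_self_nonneg _
    have hsplit : ξ₀ ^ 2 + ξ₁ ⬝ᵥ ξ₁ = 1 := by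
      rw [← hξ]
      simp [dotProduct, Fintype.sum_sum_type, ξ₁, sq, hξ₀]
    have hξ₀sq : ξ₀ ^ 2 ≤ 1 := by nlinarith [hsq ξ₁]
    have hbb : c₁ * (ξ₁ ⬝ᵥ ξ₁) ≤ b ⬝ᵥ b := by
      have := hBB ξ₁
      rwa [← Matrix.mulVec_mulVec, Matrix.dotProduct_mulVec, ← Matrix.mulVec_transpose] at this
    -- boundedness
    have hbdd : BddAbove (Set.range fun u : {u : Fin n → ℝ // (vᵀ *ᵥ u) ⬝ᵥ (vᵀ *ᵥ u) ≤ K} =>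
        ξ ⬝ᵥ ((A u.1 * (A u.1)ᵀ) *ᵥ ξ)) := by
      refine ⟨2 * K + 2 * (b ⬝ᵥ b), ?_⟩
      rintro x ⟨⟨u, hu⟩, rfl⟩
      dsimp only
      rw [key u]
      have h1 : ∑ j : Fin n ⊕ Fin N, (ξ₀ * Sum.elim (vᵀ *ᵥ u) 0 j + b j) ^ 2
          ≤ ∑ j : Fin n ⊕ Fin N, (2 * (ξ₀ * Sum.elim (vᵀ *ᵥ u) 0 j) ^ 2 + 2 * (b j) ^ 2) :=
        Finset.sum_le_sum fun j _ => by nlinarith [sq_nonneg (ξ₀ * Sum.elim (vᵀ *ᵥ u) 0 j - b j)]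
      have h2 : ∑ j : Fin n ⊕ Fin N, (2 * (ξ₀ * Sum.elim (vᵀ *ᵥ u) 0 j) ^ 2 + 2 * (b j) ^ 2)
          = 2 * ξ₀ ^ 2 * ((vᵀ *ᵥ u) ⬝ᵥ (vᵀ *ᵥ u)) + 2 * (b ⬝ᵥ b) := by
        rw [Finset.sum_add_distrib]
        have ha : ∑ j : Fin n ⊕ Fin N, 2 * (ξ₀ * Sum.elim (vᵀ *ᵥ u) 0 j) ^ 2
            = 2 * ξ₀ ^ 2 * ((vᵀ *ᵥ u) ⬝ᵥ (vᵀ *ᵥ u)) := by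
          have e : ∀ j : Fin n ⊕ Fin N, 2 * (ξ₀ * Sum.elim (vᵀ *ᵥ u) 0 j) ^ 2
              = Sum.elim (fun j => 2 * ξ₀ ^ 2 * ((vᵀ *ᵥ u) j * (vᵀ *ᵥ u) j)) (0 : Fin N → ℝ) j := by
            rintro (j | j) <;> simp <;> ring
          rw [Finset.sum_congr rfl fun j _ => e j, Fintype.sum_sum_type]
          simp [dotProduct, Finset.mul_sum]
        have hb2 : ∑ j : Fin n ⊕ Fin N, 2 * (b j) ^ 2 = 2 * (b ⬝ᵥ b) := by
          rw [dotProduct, Finset.mul_sum]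
          exact Finset.sum_congr rfl fun j _ => by ring
        rw [ha, hb2]
      have h3 : 2 * ξ₀ ^ 2 * ((vᵀ *ᵥ u) ⬝ᵥ (vᵀ *ᵥ u)) ≤ 2 * K := by
        have h4 : (0:ℝ) ≤ (vᵀ *ᵥ u) ⬝ᵥ (vᵀ *ᵥ u) :=
          Finset.sum_nonneg fun i _ => mul_self_nonneg _
        nlinarith [sq_nonneg ξ₀]
      linarith [h1, h2.le, h3]
    -- the two test points
    set w₀ : Fin n → ℝ := fun j => if j = ⟨0, hn⟩ then Real.sqrt K else 0 with hw₀def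
    have hw₀ : w₀ ⬝ᵥ w₀ = K := by
      simp [hw₀def, dotProduct, ite_mul, mul_ite, Finset.sum_ite_eq',
        Real.mul_self_sqrt hK.le]
    have hmem1 : (vᵀ *ᵥ ((vᵀ)⁻¹ *ᵥ w₀)) ⬝ᵥ (vᵀ *ᵥ ((vᵀ)⁻¹ *ᵥ w₀)) ≤ K := by
      rw [hWinv, hw₀]
    have hmem2 : (vᵀ *ᵥ ((vᵀ)⁻¹ *ᵥ (-w₀))) ⬝ᵥ (vᵀ *ᵥ ((vᵀ)⁻¹ *ᵥ (-w₀))) ≤ K := by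
      rw [hWinv]
      simp [neg_dotProduct, dotProduct_neg, hw₀]
    set u₁ : {u : Fin n → ℝ // (vᵀ *ᵥ u) ⬝ᵥ (vᵀ *ᵥ u) ≤ K} := ⟨(vᵀ)⁻¹ *ᵥ w₀, hmem1⟩
    set u₂ : {u : Fin n → ℝ // (vᵀ *ᵥ u) ⬝ᵥ (vᵀ *ᵥ u) ≤ K} := ⟨(vᵀ)⁻¹ *ᵥ (-w₀), hmem2⟩
    have hsum : (ξ ⬝ᵥ ((A u₁.1 * (A u₁.1)ᵀ) *ᵥ ξ)) + (ξ ⬝ᵥ ((A u₂.1 * (A u₂.1)ᵀ) *ᵥ ξ))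
        = 2 * (ξ₀ ^ 2 * K + b ⬝ᵥ b) := by
      rw [key, key]
      have e1 : vᵀ *ᵥ u₁.1 = w₀ := hWinv w₀
      have e2 : vᵀ *ᵥ u₂.1 = -w₀ := hWinv (-w₀)
      rw [e1, e2]
      have : ∀ j : Fin n ⊕ Fin N, Sum.elim (-w₀) (0 : Fin N → ℝ) j = - Sum.elim w₀ 0 j := by
        rintro (j | j) <;> simp
      rw [← Finset.sum_add_distrib]
      have hterm : ∀ j : Fin n ⊕ Fin N,
          (ξ₀ * Sum.elim w₀ 0 j + b j) ^ 2 + (ξ₀ * Sum.elim (-w₀) 0 j + b j) ^ 2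
          = 2 * ξ₀ ^ 2 * (Sum.elim w₀ 0 j) ^ 2 + 2 * (b j) ^ 2 := by
        intro j
        rw [this j]
        ring
      rw [Finset.sum_congr rfl fun j _ => hterm j, Finset.sum_add_distrib]
      have hw : ∑ j : Fin n ⊕ Fin N, 2 * ξ₀ ^ 2 * (Sum.elim w₀ 0 j) ^ 2
          = 2 * ξ₀ ^ 2 * K := by
        rw [← hw₀]
        simp [Fintype.sum_sum_type, dotProduct, Finset.mul_sum, sq]
      have hbsum : ∑ j : Fin n ⊕ Fin N, 2 * (b j) ^ 2 = 2 * (b ⬝ᵥ b) := by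
        simp [dotProduct, sq, Fintype.sum_sum_type]
        rw [mul_add, Finset.mul_sum, Finset.mul_sum]
      rw [hw, hbsum]
      ring
    have hmin : min K c₁ ≤ max (ξ ⬝ᵥ ((A u₁.1 * (A u₁.1)ᵀ) *ᵥ ξ))
        (ξ ⬝ᵥ ((A u₂.1 * (A u₂.1)ᵀ) *ᵥ ξ)) := by
      have h5 : min K c₁ ≤ ξ₀ ^ 2 * K + b ⬝ᵥ b := by
        have h6 : min K c₁ ≤ K := min_le_left _ _
        have h7 : min K c₁ ≤ c₁ := min_le_right _ _
        have h8 := hsq ξ₁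
        nlinarith [sq_nonneg ξ₀]
      have h9 := le_max_left (ξ ⬝ᵥ ((A u₁.1 * (A u₁.1)ᵀ) *ᵥ ξ))
        (ξ ⬝ᵥ ((A u₂.1 * (A u₂.1)ᵀ) *ᵥ ξ))
      have h10 := le_max_right (ξ ⬝ᵥ ((A u₁.1 * (A u₁.1)ᵀ) *ᵥ ξ))
        (ξ ⬝ᵥ ((A u₂.1 * (A u₂.1)ᵀ) *ᵥ ξ))
      nlinarith [hsum]
    rcases max_cases (ξ ⬝ᵥ ((A u₁.1 * (A u₁.1)ᵀ) *ᵥ ξ))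
        (ξ ⬝ᵥ ((A u₂.1 * (A u₂.1)ᵀ) *ᵥ ξ)) with ⟨heq, _⟩ | ⟨heq, _⟩
    · rw [heq] at hmin
      exact hmin.trans (le_ciSup hbdd u₁)
    · rw [heq] at hmin
      exact hmin.trans (le_ciSup hbdd u₂)
  refine ⟨main, ?_⟩
  have hξex : ∃ ξ : Fin 1 ⊕ (Fin m ⊕ Fin M) → ℝ, ξ ⬝ᵥ ξ = 1 := by
    refine ⟨fun i => if i = Sum.inl 0 then 1 else 0, ?_⟩
    simp [dotProduct, ite_mul, mul_ite, Finset.sum_ite_eq']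
  obtain ⟨ξ₀, hξ₀⟩ := hξex
  haveI : Nonempty {ξ : Fin 1 ⊕ (Fin m ⊕ Fin M) → ℝ // ξ ⬝ᵥ ξ = 1} := ⟨⟨ξ₀, hξ₀⟩⟩
  have := le_ciInf fun ξ : {ξ : Fin 1 ⊕ (Fin m ⊕ Fin M) → ℝ // ξ ⬝ᵥ ξ = 1} => main ξ.1 ξ.2
  exact lt_of_lt_of_le (lt_min hK hc₁) this
end

section
/- Let n > m ≥ 0, let v be an invertible n × n real matrix with columns v₁,…,vₙ, let a ∈ ℝⁿ, β ∈ ℝ^{m×n}, K > 0, and let a₀ ∈ ℝ, a₂ ≤ 0 and g ∈ ℝᵐ. Let Q = (v vᵀ)⁻¹, let q₁,…,qₙ be the columns of (vᵀ)⁻¹, and define the m+1 vectors ψ_k = Σ_{i=1}^n β_{ki} q_i for k = 1,…,m and ψ_{m+1} = Q a. Define F(u) = a₀ ⟨u, a⟩ + (a₂/2) uᵀ v vᵀ u + Σ_{k=1}^m g_k ⟨u, Σ_{i=1}^n β_{ki} v_i⟩. Then there exist real numbers ν₁,…,ν_{m+1} such that u* = Σ_{k=1}^{m+1} ν_k ψ_k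 satisfies uᵀ* v vᵀ u* ≤ K and F(u) ≤ F(u*) for all u ∈ ℝⁿ with uᵀ v vᵀ u ≤ K; that is, the constrained maximizer of F can be chosen as a linear combination of the m+1 fixed vectors ψ₁,…,ψ_{m+1}. -/
open Matrix

set_option maxHeartbeats 1000000 in
/-- Scalar/vector core: the quadratic `w ↦ w⬝c + (a₂/2)‖w‖²` on the ball
`‖w‖² ≤ K` is maximized at a scalar multiple of `c`. -/
lemma aux_gmax {n : ℕ} (K a₂ : ℝ) (hK : 0 < K) (ha₂ : a₂ ≤ 0) (c : Fin n → ℝ) :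
    ∃ t : ℝ, (t • c) ⬝ᵥ (t • c) ≤ K ∧
      ∀ w : Fin n → ℝ, w ⬝ᵥ w ≤ K →
        w ⬝ᵥ c + (a₂ / 2) * (w ⬝ᵥ w) ≤
          (t • c) ⬝ᵥ c + (a₂ / 2) * ((t • c) ⬝ᵥ (t • c)) := by
  have hself : ∀ x : Fin n → ℝ, 0 ≤ x ⬝ᵥ x := fun x =>
    Finset.sum_nonneg fun i _ => mul_self_nonneg _
  by_cases hc : c = 0
  · refine ⟨0, by simpa using hK.le, fun w hw => ?_⟩
    subst hc
    simp only [dotProduct_zero, smul_zero, zero_dotProduct, zero_add, add_zero]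
    have := hself w
    nlinarith
  · set C : ℝ := c ⬝ᵥ c with hCdef
    have hC : 0 < C := lt_of_le_of_ne (hself c) fun h => hc (dotProduct_self_eq_zero.mp h.symm)
    set nc : ℝ := Real.sqrt C with hncdef
    set r : ℝ := Real.sqrt K with hrdef
    have hnc : 0 < nc := Real.sqrt_pos.mpr hC
    have hr : 0 < r := Real.sqrt_pos.mpr hK
    have hnc2 : nc ^ 2 = C := Real.sq_sqrt hC.le
    have hr2 : r ^ 2 = K := Real.sq_sqrt hK.le
    clear_value C nc r
    by_cases hcase : nc + a₂ * r ≤ 0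
    · -- interior optimum t = -1/a₂
      have ha₂' : a₂ < 0 := by nlinarith
      have ha₂sq : 0 < a₂ ^ 2 := by nlinarith
      refine ⟨-1 / a₂, ?_, fun w hw => ?_⟩
      · have h1 : ((-1 / a₂) • c) ⬝ᵥ ((-1 / a₂) • c) = C / a₂ ^ 2 := by
          simp only [smul_dotProduct, dotProduct_smul, smul_eq_mul, ← hCdef]
          rw [eq_div_iff (ne_of_gt ha₂sq)]
          field_simp
          exact div_self ha₂'.ne
        rw [h1, div_le_iff₀ ha₂sq]
        have h2 : nc ≤ -a₂ * r := by nlinarith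
        nlinarith
      · have hq : 0 ≤ (w + a₂⁻¹ • c) ⬝ᵥ (w + a₂⁻¹ • c) := hself _
        simp only [add_dotProduct, dotProduct_add, smul_dotProduct, dotProduct_smul,
          smul_eq_mul, ← hCdef] at hq ⊢
        have hcw : c ⬝ᵥ w = w ⬝ᵥ c := dotProduct_comm c w
        rw [hcw] at hq
        have ha₂n : a₂ ≠ 0 := ha₂'.ne
        set X : ℝ := w ⬝ᵥ c
        set W : ℝ := w ⬝ᵥ w
        have hq' : 0 ≤ W + 2 * a₂⁻¹ * X + a₂⁻¹ ^ 2 * C := by nlinarith [hq]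
        have key : a₂ * (W + 2 * a₂⁻¹ * X + a₂⁻¹ ^ 2 * C) ≤ 0 :=
          mul_nonpos_of_nonpos_of_nonneg ha₂'.le hq'
        have key' : a₂ * W + 2 * X + C / a₂ ≤ 0 := by
          have e1 : a₂ * (W + 2 * a₂⁻¹ * X + a₂⁻¹ ^ 2 * C) = a₂ * W + 2 * X + C / a₂ := by
            field_simp
          linarith [e1 ▸ key]
        have e2 : -1 / a₂ * C + a₂ / 2 * (-1 / a₂ * (-1 / a₂ * C)) - (X + a₂ / 2 * W) =
            -(a₂ * W + 2 * X + C / a₂) / 2 := by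
          field_simp
          ring
        nlinarith [e2, key']
    · -- boundary optimum t = r / nc
      push_neg at hcase
      refine ⟨r / nc, ?_, fun w hw => ?_⟩
      · have h1 : ((r / nc) • c) ⬝ᵥ ((r / nc) • c) = (r / nc) ^ 2 * C := by
          simp only [smul_dotProduct, dotProduct_smul, smul_eq_mul, ← hCdef]; ring
        rw [h1, ← hnc2, div_pow]
        rw [div_mul_eq_mul_div, mul_div_assoc, div_self (by positivity), mul_one, hr2]
      · have hCS0 : (w ⬝ᵥ c) ^ 2 ≤ (w ⬝ᵥ w) * C := by
          have := Finset.sum_mul_sq_le_sq_mul_sq Finset.univ w c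
          simpa [hCdef, dotProduct, sq] using this
        have hW00 : 0 ≤ w ⬝ᵥ w := hself w
        set X : ℝ := w ⬝ᵥ c with hX
        set W : ℝ := w ⬝ᵥ w with hW
        clear_value X W
        set s : ℝ := Real.sqrt W with hsdef
        have hs0 : 0 ≤ s := Real.sqrt_nonneg _
        have hs2 : s ^ 2 = W := Real.sq_sqrt hW00
        have hsr : s ≤ r := by rw [hsdef, hrdef]; exact Real.sqrt_le_sqrt hw
        clear_value s
        have hXs : X ≤ s * nc := by
          nlinarith [mul_nonneg hs0 hnc.le]
        have hRHS : ((r / nc) • c) ⬝ᵥ c + a₂ / 2 * (((r / nc) • c) ⬝ᵥ ((r / nc) • c)) =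
            r * nc + a₂ / 2 * K := by
          simp only [smul_dotProduct, dotProduct_smul, smul_eq_mul, ← hCdef]
          rw [← hnc2, ← hr2]
          field_simp
        rw [hRHS]
        have hbig : 0 ≤ nc + a₂ / 2 * (s + r) := by nlinarith
        have hp : 0 ≤ (r - s) * (nc + a₂ / 2 * (s + r)) :=
          mul_nonneg (sub_nonneg.mpr hsr) hbig
        have h4 : s * nc + a₂ / 2 * s ^ 2 ≤ r * nc + a₂ / 2 * r ^ 2 := by nlinarith [hp]
        rw [← hs2, ← hr2]
        linarith [hXs, h4]

/-- finite-dimensional core of the relaxed Mutual Fund Theorem: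
with `Q = (v vᵀ)⁻¹`, `q_i` the columns of `(vᵀ)⁻¹`, `ψ_k = Σ_i β_{k i} q_i`
(`k = 1,…,m`) and `ψ_{m+1} = Q a`, the function
`F u = a₀⟨u, a⟩ + (a₂/2) uᵀ v vᵀ u + Σ_k g_k ⟨u, Σ_i β_{k i} v_i⟩` attains its
maximum over `{u : uᵀ v vᵀ u ≤ K}` at a linear combination of `ψ₁,…,ψ_{m+1}`. -/
theorem bellman_maximizer_in_span_of_mutual_funds
    (n m : ℕ) (hmn : m < n)
    (v : Matrix (Fin n) (Fin n) ℝ) (hv : IsUnit v.det)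
    (a : Fin n → ℝ) (β : Matrix (Fin m) (Fin n) ℝ)
    (K : ℝ) (hK : 0 < K) (a₀ : ℝ) (a₂ : ℝ) (ha₂ : a₂ ≤ 0) (g : Fin m → ℝ)
    (Q : Matrix (Fin n) (Fin n) ℝ) (hQ : Q = (v * vᵀ)⁻¹)
    (q : Fin n → Fin n → ℝ) (hq : ∀ i j, q i j = (vᵀ)⁻¹ j i)
    (ψ : Fin m → Fin n → ℝ) (hψ : ∀ k, ψ k = ∑ i, β k i • q i)
    (ψlast : Fin n → ℝ) (hψlast : ψlast = Q *ᵥ a)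
    (F : (Fin n → ℝ) → ℝ)
    (hF : ∀ u, F u = a₀ * (u ⬝ᵥ a) + (a₂ / 2) * ((vᵀ *ᵥ u) ⬝ᵥ (vᵀ *ᵥ u)) +
        ∑ k, g k * (u ⬝ᵥ ∑ i, β k i • (fun j => v j i))) :
    ∃ (ν : Fin m → ℝ) (νlast : ℝ),
      (vᵀ *ᵥ (∑ k, ν k • ψ k + νlast • ψlast)) ⬝ᵥ
          (vᵀ *ᵥ (∑ k, ν k • ψ k + νlast • ψlast)) ≤ K ∧
      ∀ u : Fin n → ℝ, (vᵀ *ᵥ u) ⬝ᵥ (vᵀ *ᵥ u) ≤ K →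
        F u ≤ F (∑ k, ν k • ψ k + νlast • ψlast) := by
  have hvT : IsUnit vᵀ.det := by simpa [Matrix.det_transpose] using hv
  have hinvT : vᵀ * (vᵀ)⁻¹ = 1 := Matrix.mul_nonsing_inv _ hvT
  have hinv : v * v⁻¹ = 1 := Matrix.mul_nonsing_inv _ hv
  set c : Fin n → ℝ := a₀ • (v⁻¹ *ᵥ a) + ∑ k, g k • β k with hc
  -- auxiliary distributivity over finite sums
  have dsum : ∀ (x : Fin n → ℝ) (f : Fin m → Fin n → ℝ),
      x ⬝ᵥ (∑ k, f k) = ∑ k, x ⬝ᵥ f k := by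
    intro x f
    simp only [dotProduct, Finset.sum_apply, Finset.mul_sum]
    exact Finset.sum_comm
  have msum : ∀ (f : Fin m → Fin n → ℝ), vᵀ *ᵥ (∑ k, f k) = ∑ k, vᵀ *ᵥ f k := by
    intro f
    funext j
    simp only [Matrix.mulVec, dotProduct, Finset.sum_apply, Finset.mul_sum]
    exact Finset.sum_comm
  -- vᵀ *ᵥ ψ k = β k
  have hψcol : ∀ k, ψ k = (vᵀ)⁻¹ *ᵥ β k := by
    intro k
    rw [hψ k]
    funext j
    simp only [Finset.sum_apply, Pi.smul_apply, smul_eq_mul, Matrix.mulVec, dotProduct]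
    exact Finset.sum_congr rfl fun i _ => by rw [hq]; ring
  have hψ' : ∀ k, vᵀ *ᵥ ψ k = β k := by
    intro k
    rw [hψcol k, Matrix.mulVec_mulVec, hinvT, Matrix.one_mulVec]
  have hψl' : vᵀ *ᵥ ψlast = v⁻¹ *ᵥ a := by
    rw [hψlast, hQ, Matrix.mulVec_mulVec, Matrix.mul_inv_rev, ← Matrix.mul_assoc, hinvT,
      Matrix.one_mul]
  have hcols : ∀ k, (∑ i, β k i • (fun j => v j i)) = v *ᵥ β k := by
    intro k
    funext j
    simp only [Finset.sum_apply, Pi.smul_apply, smul_eq_mul, Matrix.mulVec, dotProduct]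
    exact Finset.sum_congr rfl fun i _ => by ring
  -- F u = (vᵀ *ᵥ u) ⬝ᵥ c + (a₂/2) ‖vᵀ *ᵥ u‖²
  have hFG : ∀ u, F u = (vᵀ *ᵥ u) ⬝ᵥ c + (a₂ / 2) * ((vᵀ *ᵥ u) ⬝ᵥ (vᵀ *ᵥ u)) := by
    intro u
    rw [hF u]
    have h1 : (vᵀ *ᵥ u) ⬝ᵥ (v⁻¹ *ᵥ a) = u ⬝ᵥ a := by
      rw [Matrix.mulVec_transpose, Matrix.dotProduct_mulVec, Matrix.vecMul_vecMul, hinv,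
        Matrix.vecMul_one]
    have h2 : ∀ k, u ⬝ᵥ (∑ i, β k i • (fun j => v j i)) = (vᵀ *ᵥ u) ⬝ᵥ β k := by
      intro k
      rw [hcols k, Matrix.mulVec_transpose, Matrix.dotProduct_mulVec]
    have h3 : (vᵀ *ᵥ u) ⬝ᵥ c = a₀ * (u ⬝ᵥ a) + ∑ k, g k * ((vᵀ *ᵥ u) ⬝ᵥ β k) := by
      rw [hc, dotProduct_add, dotProduct_smul, smul_eq_mul, h1, dsum]
      congr 1
      exact Finset.sum_congr rfl fun k _ => by rw [dotProduct_smul, smul_eq_mul]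
    rw [h3]
    simp_rw [h2]
    ring
  obtain ⟨t, ht1, ht2⟩ := aux_gmax K a₂ hK ha₂ c
  have hustar : vᵀ *ᵥ (∑ k, (t * g k) • ψ k + (t * a₀) • ψlast) = t • c := by
    rw [Matrix.mulVec_add, Matrix.mulVec_smul, hψl', msum]
    simp_rw [Matrix.mulVec_smul, hψ']
    rw [hc, smul_add, Finset.smul_sum, add_comm]
    congr 1
    · rw [smul_smul, mul_comm]
    · exact Finset.sum_congr rfl fun k _ => by rw [smul_smul, mul_comm]
  refine ⟨fun k => t * g k, t * a₀, ?_, ?_⟩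
  · rw [hustar]; exact ht1
  · intro u hu
    rw [hFG u, hFG _, hustar]
    exact ht2 _ hu
end
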